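/- Thorup-Zwick stretch lemma: let V = A_0 ⊇ ... ⊇ A_k = ∅ with A_k−1 possibly nonempty, and for v ∈ V let p_i(v) ∈ A_i achieve dist_G(v, p_i(v)) = dist_G(v, A_i). For any u, w ∈ V, there exists an index i ≤ k−1 and a vertex z ∈ B(u) ∩ B(w) ∪ {p_i(u), p_i(w)} such that dist_G(u,z) + dist_G(w,z) ≤ (2k−1)·dist_G(u,w). In particular, defining hub sets S(v) = B(v) ∪ {p_0(v),...,p_{k−1}(v)} with exact distances as estimates yields a hub-labeling scheme of stretch 2k−1. -/

import Mathlib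

open scoped ENNReal

/-- Distance from a vertex to a set: `dist_G(v, A) = min_{u ∈ A} dist_G(v, u)` (∞ if `A = ∅`). -/
noncomputable def distToSet {V : Type*} (d : V → V → ℝ≥0∞) (v : V) (A : Set V) : ℝ≥0∞ :=
  ⨅ u ∈ A, d v u

/-- The Thorup–Zwick bunch `B(x) = ⋃_{i<k} {y ∈ A_i \ A_{i+1} : d(x,y) < d(x, A_{i+1})}`. -/
def Bunch {V : Type*} (d : V → V → ℝ≥0∞) (k : ℕ) (A : ℕ → Set V) (x : V) : Set V :=
  ⋃ i < k, {y ∈ A i \ A (i + 1) | d x y < distToSet d x (A (i + 1))}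

/-- the Thorup–Zwick stretch lemma.  For any `u, w` there is an index `i ≤ k-1`
and a vertex `z ∈ (B(u) ∩ B(w)) ∪ {p_i(u), p_i(w)}` with
`d(u,z) + d(w,z) ≤ (2k-1)·d(u,w)`; in particular, hub sets `S(v) = B(v) ∪ {p_0(v),…,p_{k-1}(v)}`
with exact distances give a hub-labeling scheme of stretch `2k-1`. -/
theorem tz_stretch_lemma {V : Type*}
    (d : V → V → ℝ≥0∞) (hrefl : ∀ x, d x x = 0)
    (hsym : ∀ x y, d x y = d y x)
    (htri : ∀ x y z, d x z ≤ d x y + d y z)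
    (k : ℕ) (hk : 1 ≤ k) (A : ℕ → Set V) (hdec : ∀ i, A (i + 1) ⊆ A i)
    (h0 : A 0 = Set.univ) (hA : A k = ∅)
    (p : ℕ → V → V)
    (hp : ∀ i < k, ∀ x : V, p i x ∈ A i ∧ d x (p i x) = distToSet d x (A i)) :
    (∀ u w : V, ∃ i < k, ∃ z ∈ (Bunch d k A u ∩ Bunch d k A w) ∪ {p i u, p i w},
        d u z + d w z ≤ (2 * k - 1 : ℝ≥0∞) * d u w) ∧
      (∀ u w : V,
        (⨅ z ∈ (Bunch d k A u ∪ (fun i => p i u) '' {i | i < k}) ∩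
            (Bunch d k A w ∪ (fun i => p i w) '' {i | i < k}),
          (d u z + d w z)) ≤ (2 * k - 1 : ℝ≥0∞) * d u w) := by
  -- basic cast arithmetic
  have hcast : (2 * (k : ℝ≥0∞) - 1) = ((2 * k - 1 : ℕ) : ℝ≥0∞) := by
    rw [ENNReal.natCast_sub]; push_cast; ring_nf
  have hone : (1 : ℝ≥0∞) ≤ 2 * (k : ℝ≥0∞) - 1 := by
    rw [hcast]
    exact_mod_cast Nat.one_le_iff_ne_zero.mpr (by omega)
  -- monotonicity of the chain
  have hmono : ∀ i j : ℕ, i ≤ j → A j ⊆ A i := by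
    intro i j hij
    induction j with
    | zero => simp_all
    | succ n ih =>
      rcases Nat.lt_or_ge i (n + 1) with h | h
      · exact (hdec n).trans (ih (Nat.lt_succ_iff.mp h))
      · have : i = n + 1 := le_antisymm hij h
        subst this; exact subset_rfl
  have hdist_anti : ∀ x : V, ∀ S T : Set V, S ⊆ T → distToSet d x T ≤ distToSet d x S := by
    intro x S T h
    exact le_iInf₂ fun z hz => iInf₂_le z (h hz)
  have hempty : ∀ x : V, distToSet d x (A k) = ⊤ := by
    intro x; simp [distToSet, hA]
  -- the zeroth pivot is at distance 0
  have hp0 : ∀ x : V, d x (p 0 x) = 0 := by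
    intro x
    refine le_antisymm ?_ zero_le
    rw [(hp 0 hk x).2]
    calc distToSet d x (A 0) ≤ d x x := by
          rw [h0]; exact iInf₂_le x trivial
      _ = 0 := hrefl x
  -- maximal level of a vertex
  have hlevel : ∀ n j : ℕ, ∀ z : V, k ≤ j + n → j < k → z ∈ A j →
      ∃ ℓ, j ≤ ℓ ∧ ℓ < k ∧ z ∈ A ℓ ∧ z ∉ A (ℓ + 1) := by
    intro n
    induction n with
    | zero => intro j z h hj _; omega
    | succ n ih =>
      intro j z h hj hz
      by_cases h1 : z ∈ A (j + 1)
      · have hj1 : j + 1 < k := by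
          rcases Nat.lt_or_ge (j + 1) k with h' | h'
          · exact h'
          · exact absurd (hA ▸ hmono k (j + 1) h' h1) (Set.notMem_empty z)
        rcases ih (j + 1) z (by omega) hj1 h1 with ⟨ℓ, h1, h2, h3, h4⟩
        exact ⟨ℓ, by omega, h2, h3, h4⟩
      · exact ⟨j, le_rfl, hj, hz, h1⟩
  constructor
  · -- part 1: take z = p 0 u
    intro u w
    refine ⟨0, hk, p 0 u, Or.inr (Set.mem_insert _ _), ?_⟩
    have hduz : d u (p 0 u) = 0 := hp0 u
    have hdwz : d w (p 0 u) ≤ d u w := by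
      calc d w (p 0 u) ≤ d w u + d u (p 0 u) := htri _ _ _
        _ = d u w := by rw [hduz, add_zero, hsym]
    calc d u (p 0 u) + d w (p 0 u) ≤ 0 + d u w := add_le_add hduz.le hdwz
      _ = d u w := by rw [zero_add]
      _ ≤ (2 * k - 1 : ℝ≥0∞) * d u w := le_mul_of_one_le_left zero_le hone
  · -- part 2
    intro u w
    set Δ := d u w with hΔdef
    by_cases htop : Δ = ⊤
    · have : (2 * (k : ℝ≥0∞) - 1) * Δ = ⊤ := by
        rw [htop, ENNReal.mul_top (by positivity : (2 * (k:ℝ≥0∞) - 1) ≠ 0)]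
      rw [this]; exact le_top
    · set Su := Bunch d k A u ∪ (fun i => p i u) '' {i | i < k} with hSu
      set Sw := Bunch d k A w ∪ (fun i => p i w) '' {i | i < k} with hSw
      -- the "stop" step
      have hstop : ∀ j : ℕ, ∀ x y : V, j < k →
          ((x = u ∧ y = w) ∨ (x = w ∧ y = u)) →
          d x (p j x) ≤ (j : ℝ≥0∞) * Δ →
          d y (p j x) < distToSet d y (A (j + 1)) →
          ∃ z ∈ Su ∩ Sw, d u z + d w z ≤ (2 * (k : ℝ≥0∞) - 1) * Δ := by
        intro j x y hj hor hinv hstopc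
        set z := p j x with hzdef
        have hzAj : z ∈ A j := (hp j hj x).1
        obtain ⟨ℓ, hjℓ, hℓk, hzℓ, hzℓ1⟩ := hlevel k j z (by omega) hj hzAj
        have hzBy : z ∈ Bunch d k A y := by
          simp only [Bunch, Set.mem_iUnion]
          exact ⟨ℓ, hℓk, ⟨⟨hzℓ, hzℓ1⟩,
            lt_of_lt_of_le hstopc (hdist_anti y _ _ (hmono (j + 1) (ℓ + 1) (by omega)))⟩⟩
        have hzpx : z ∈ (fun i => p i x) '' {i | i < k} := ⟨j, hj, rfl⟩
        have hdyx : d y x = Δ := by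
          rcases hor with ⟨hx, hy⟩ | ⟨hx, hy⟩ <;> subst hx <;> subst hy
          · rw [hsym]
          · rfl
        have hdyz : d y z ≤ ((j : ℝ≥0∞) + 1) * Δ := by
          calc d y z ≤ d y x + d x z := htri _ _ _
            _ ≤ Δ + (j : ℝ≥0∞) * Δ := add_le_add hdyx.le hinv
            _ = ((j : ℝ≥0∞) + 1) * Δ := by ring
        have hsum : d x z + d y z ≤ ((2 * j + 1 : ℕ) : ℝ≥0∞) * Δ := by
          calc d x z + d y z ≤ (j : ℝ≥0∞) * Δ + ((j : ℝ≥0∞) + 1) * Δ := add_le_add hinv hdyz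
            _ = ((2 * j + 1 : ℕ) : ℝ≥0∞) * Δ := by push_cast; ring
        have hle : ((2 * j + 1 : ℕ) : ℝ≥0∞) * Δ ≤ (2 * (k : ℝ≥0∞) - 1) * Δ := by
          rw [hcast]
          exact mul_le_mul_left (Nat.cast_le.mpr (by omega)) Δ
        rcases hor with ⟨hx, hy⟩ | ⟨hx, hy⟩
        · subst hx; subst hy
          exact ⟨z, ⟨Or.inr hzpx, Or.inl hzBy⟩, le_trans hsum hle⟩
        · subst hx; subst hy
          refine ⟨z, ⟨Or.inl hzBy, Or.inr hzpx⟩, le_trans ?_ hle⟩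
          rw [add_comm] at hsum; exact hsum
      -- the finiteness fact used to rule out reaching level k
      have hfin : ∀ j : ℕ, ∀ x y : V, d x (p j x) ≤ (j : ℝ≥0∞) * Δ →
          ((x = u ∧ y = w) ∨ (x = w ∧ y = u)) → d y (p j x) < ⊤ := by
        intro j x y hinv hor
        have hdyx : d y x = Δ := by
          rcases hor with ⟨hx, hy⟩ | ⟨hx, hy⟩ <;> subst hx <;> subst hy
          · rw [hsym]
          · rfl
        calc d y (p j x) ≤ d y x + d x (p j x) := htri _ _ _
          _ ≤ Δ + (j : ℝ≥0∞) * Δ := add_le_add hdyx.le hinv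
          _ < ⊤ := by
              refine ENNReal.add_lt_top.mpr ⟨Ne.lt_top htop, ?_⟩
              exact ENNReal.mul_lt_top (ENNReal.natCast_lt_top j) (Ne.lt_top htop)
      -- main induction
      have main : ∀ m j : ℕ, ∀ x y : V, j < k → k ≤ j + m + 1 →
          ((x = u ∧ y = w) ∨ (x = w ∧ y = u)) →
          d x (p j x) ≤ (j : ℝ≥0∞) * Δ →
          ∃ z ∈ Su ∩ Sw, d u z + d w z ≤ (2 * (k : ℝ≥0∞) - 1) * Δ := by
        intro m
        induction m with
        | zero =>
          intro j x y hj hjm hor hinv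
          by_cases hc : d y (p j x) < distToSet d y (A (j + 1))
          · exact hstop j x y hj hor hinv hc
          · exfalso
            push_neg at hc
            have hjk : j + 1 = k := by omega
            rw [hjk, hempty y, top_le_iff] at hc
            exact absurd hc (ne_top_of_lt (hfin j x y hinv hor))
        | succ m ih =>
          intro j x y hj hjm hor hinv
          by_cases hc : d y (p j x) < distToSet d y (A (j + 1))
          · exact hstop j x y hj hor hinv hc
          · push_neg at hc
            have hj1 : j + 1 < k := by
              rcases Nat.lt_or_ge (j + 1) k with h' | h'
              · exact h'
              · exfalso
                have hjk : j + 1 = k := by omega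
                rw [hjk, hempty y, top_le_iff] at hc
                exact absurd hc (ne_top_of_lt (hfin j x y hinv hor))
            have hdyx : d y x = Δ := by
              rcases hor with ⟨hx, hy⟩ | ⟨hx, hy⟩ <;> subst hx <;> subst hy
              · rw [hsym]
              · rfl
            have hnew : d y (p (j + 1) y) ≤ ((j + 1 : ℕ) : ℝ≥0∞) * Δ := by
              rw [(hp (j + 1) hj1 y).2]
              calc distToSet d y (A (j + 1)) ≤ d y (p j x) := hc
                _ ≤ d y x + d x (p j x) := htri _ _ _
                _ ≤ Δ + (j : ℝ≥0∞) * Δ := add_le_add hdyx.le hinv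
                _ = ((j + 1 : ℕ) : ℝ≥0∞) * Δ := by push_cast; ring
            have hor' : (y = u ∧ x = w) ∨ (y = w ∧ x = u) := by tauto
            exact ih (j + 1) y x hj1 (by omega) hor' (by exact_mod_cast hnew)
      have h0inv : d u (p 0 u) ≤ ((0 : ℕ) : ℝ≥0∞) * Δ := by
        rw [hp0 u]; exact zero_le
      obtain ⟨z, hz, hb⟩ := main k 0 u w hk (by omega) (Or.inl ⟨rfl, rfl⟩)
        (by exact_mod_cast h0inv)
      exact le_trans (iInf₂_le z hz) hb
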